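/- The generalized GHZ state ψ_Θ = sin Θ |0000⟩ + cos Θ |1111⟩ is uniquely determined among pure states by its two-qubit reduced density matrices (within the family φ = sinΘ|0000⟩ + e^{iγ}cosΘ|1111⟩ of states with the same 2-RDMs) if and only if Θ = kπ/2 for some integer k, i.e., if and only if ψ_Θ = ±|0000⟩ or ±|1111⟩. -/

import Mathlib

open Matrix Complex

/-- Inner product `⟨ψ|φ⟩` of four-qubit states. -/
noncomputable def inner4 (ψ φ : (Fin 4 → Fin 2) → ℂ) : ℂ :=
  ∑ f : Fin 4 → Fin 2, (starRingEnd ℂ) (ψ f) * φ f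

/-- The generalized GHZ state `sin Θ |0000⟩ + e^{iγ} cos Θ |1111⟩`. -/
noncomputable def ghzPhase (Θ γ : ℝ) : (Fin 4 → Fin 2) → ℂ :=
  fun f => if f = (fun _ => 0) then (Real.sin Θ : ℂ)
    else if f = (fun _ => 1) then Complex.exp (γ * I) * (Real.cos Θ : ℂ) else 0

/-- The generalized GHZ state `ψ_Θ = sin Θ |0000⟩ + cos Θ |1111⟩` is uniquely determined
within the family `φ_γ = sin Θ |0000⟩ + e^{iγ} cos Θ |1111⟩` of pure states sharing its
two-qubit reduced density matrices (i.e. every member of the family has fidelity 1 with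
`ψ_Θ`) if and only if `Θ = kπ/2` for some integer `k`. -/
lemma inner4_val (Θ γ : ℝ) :
    inner4 (ghzPhase Θ 0) (ghzPhase Θ γ) =
      ((Real.sin Θ : ℂ))^2 + Complex.exp (γ * I) * ((Real.cos Θ : ℂ))^2 := by
  have hne : (fun _ : Fin 4 => (0 : Fin 2)) ≠ (fun _ => 1) := by
    intro h; exact absurd (congrFun h 0) (by decide)
  rw [inner4, Finset.sum_eq_add_of_mem (fun _ : Fin 4 => (0:Fin 2)) (fun _ => 1)
    (Finset.mem_univ _) (Finset.mem_univ _) hne ?_]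
  · simp only [ghzPhase, if_pos rfl, if_neg hne, if_neg hne.symm, if_true,
      Complex.ofReal_zero, zero_mul, Complex.exp_zero, one_mul, _root_.map_mul,
      Complex.conj_ofReal]
    ring
  · intro c _ hc
    simp [ghzPhase, hc.1, hc.2]

lemma abs_val (Θ γ : ℝ) :
    ‖inner4 (ghzPhase Θ 0) (ghzPhase Θ γ)‖ ^ 2 =
      Real.sin Θ ^ 4 + Real.cos Θ ^ 4 +
        2 * Real.sin Θ ^ 2 * Real.cos Θ ^ 2 * Real.cos γ := by
  rw [inner4_val, Complex.sq_norm, Complex.normSq_apply]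
  simp only [Complex.add_re, Complex.add_im, Complex.mul_re, Complex.mul_im,
    ← Complex.ofReal_pow, Complex.ofReal_re, Complex.ofReal_im,
    Complex.exp_ofReal_mul_I_re, Complex.exp_ofReal_mul_I_im]
  linear_combination Real.cos Θ ^ 4 * Real.sin_sq_add_cos_sq γ

theorem ghz_udp_iff (Θ : ℝ) :
    (∀ γ : ℝ, ‖inner4 (ghzPhase Θ 0) (ghzPhase Θ γ)‖ ^ 2 = 1) ↔
    ∃ k : ℤ, Θ = k * Real.pi / 2 := by

  constructor
  · intro h
    have h1 := h Real.pi
    rw [abs_val, Real.cos_pi] at h1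
    have h0 : Real.sin Θ ^ 2 * Real.cos Θ ^ 2 = 0 := by
      nlinarith [Real.sin_sq_add_cos_sq Θ]
    have h2 : Real.sin (2 * Θ) = 0 := by
      have hs : Real.sin (2 * Θ) ^ 2 = 0 := by
        rw [Real.sin_two_mul]; nlinarith
      exact pow_eq_zero_iff (two_ne_zero) |>.mp hs
    rw [Real.sin_eq_zero_iff] at h2
    obtain ⟨k, hk⟩ := h2
    exact ⟨k, by linarith⟩
  · rintro ⟨k, rfl⟩ γ
    set x := (k : ℝ) * Real.pi / 2 with hx
    have hsc : Real.sin x * Real.cos x = 0 := by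
      have h2 : Real.sin (2 * x) = 0 := by
        rw [show (2 : ℝ) * x = k * Real.pi by rw [hx]; ring]
        exact Real.sin_int_mul_pi k
      rw [Real.sin_two_mul] at h2; linarith
    have h0 : Real.sin x ^ 2 * Real.cos x ^ 2 = 0 := by nlinarith [hsc]
    have hp := Real.sin_sq_add_cos_sq x
    rw [abs_val, show Real.sin x ^ 4 + Real.cos x ^ 4 +
        2 * Real.sin x ^ 2 * Real.cos x ^ 2 * Real.cos γ =
      (Real.sin x ^ 2 + Real.cos x ^ 2) ^ 2 - 2 * (Real.sin x ^ 2 * Real.cos x ^ 2)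
        + 2 * (Real.sin x ^ 2 * Real.cos x ^ 2) * Real.cos γ by ring, h0, hp]
    ring
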